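/- Let Ω be an open convex subset of ℂ^d, p ∈ Ω, x ∈ ∂Ω, and suppose the distance from p to the complement of Ω along the complex line through p and x satisfies δ_Ω(p; x−p) ≥ ε‖x−p‖ for some ε > 0. Define x_t = x + e^{−2t}(p − x) for t ≥ 0. Then for any metric d on Ω satisfying the two-sided Kobayashi bounds ‖v‖/(2δ_Ω(q;v)) ≤ K(q;v) ≤ ‖v‖/δ_Ω(q;v) for the infinitesimal metric K generating d, together with the lower bound d(x_{t₁},x_{t₂}) ≥ |t₁−t₂| from the half-plane projection, one has |t₁−t₂| ≤ d(x_{t₁},x_{t₂}) ≤ (2/ε)|t₁−t₂| for all t₁,t₂ ≥ 0; in particular the segment [p,x) parametrized by x_t is a (2/ε, 0)-quasi-geodesic. The upper bound follows purely from the estimate δ_Ω(x_t; ẋ_t) ≥ ε e^{−2t} and K(q;v) ≤ ‖v‖/δ_Ω(q;v): namely, ∫_{t₁}^{t₂} K(x_t; ẋ_t) dt ≤ (2/ε)|t₂−t₁|. -/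

import Mathlib

noncomputable def lineDist {d : ℕ} (Ω : Set (EuclideanSpace ℂ (Fin d)))
    (q v : EuclideanSpace ℂ (Fin d)) : ℝ :=
  Metric.infDist q {w | w ∉ Ω ∧ ∃ c : ℂ, w = q + c • v}

theorem stmt_15 (d : ℕ) (Ω : Set (EuclideanSpace ℂ (Fin d)))
    (hopen : IsOpen Ω) (hconv : Convex ℝ Ω)
    (p : EuclideanSpace ℂ (Fin d)) (hp : p ∈ Ω)
    (x : EuclideanSpace ℂ (Fin d)) (hx : x ∈ frontier Ω)
    (ε : ℝ) (hε : 0 < ε)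
    (hδ : ε * ‖x - p‖ ≤ lineDist Ω p (x - p))
    (σ : ℝ → EuclideanSpace ℂ (Fin d))
    (hσ : ∀ t, σ t = x + Real.exp (-2 * t) • (p - x))
    (dΩ : EuclideanSpace ℂ (Fin d) → EuclideanSpace ℂ (Fin d) → ℝ)
    (hdsym : ∀ a b, dΩ a b = dΩ b a)
    (K : EuclideanSpace ℂ (Fin d) → EuclideanSpace ℂ (Fin d) → ℝ)
    (hK : ∀ q ∈ Ω, ∀ v : EuclideanSpace ℂ (Fin d), v ≠ 0 →
      ‖v‖ / (2 * lineDist Ω q v) ≤ K q v ∧ K q v ≤ ‖v‖ / lineDist Ω q v)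
    (hlow : ∀ t₁ t₂ : ℝ, 0 ≤ t₁ → 0 ≤ t₂ → |t₁ - t₂| ≤ dΩ (σ t₁) (σ t₂))
    (hlen : ∀ t₁ t₂ : ℝ, 0 ≤ t₁ → t₁ ≤ t₂ →
      dΩ (σ t₁) (σ t₂) ≤ ∫ t in t₁..t₂, K (σ t) ((-2 * Real.exp (-2 * t)) • (p - x))) :
    ∀ t₁ t₂ : ℝ, 0 ≤ t₁ → 0 ≤ t₂ →
      |t₁ - t₂| ≤ dΩ (σ t₁) (σ t₂) ∧ dΩ (σ t₁) (σ t₂) ≤ (2 / ε) * |t₁ - t₂| := by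
  have creal : ∀ (r : ℝ) (m : EuclideanSpace ℂ (Fin d)), r • m = ((r : ℂ)) • m :=
    fun r m => (Complex.coe_smul r m).symm
  have hxΩ : x ∉ Ω := fun h => hx.2 (by rwa [hopen.interior_eq])
  have hxp : x - p ≠ 0 := sub_ne_zero.mpr (fun h => hxΩ (h ▸ hp))
  have hpx : p - x ≠ 0 := fun h => hxp (neg_eq_zero.mp (by rw [← h]; abel))
  have hnorm : 0 < ‖x - p‖ := norm_pos_iff.mpr hxp
  -- helper: lower bound for infDist
  have hle : ∀ (b : ℝ) (s : Set (EuclideanSpace ℂ (Fin d))) (y : EuclideanSpace ℂ (Fin d)),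
      s.Nonempty → (∀ w ∈ s, b ≤ dist y w) → b ≤ Metric.infDist y s := by
    intro b s y hne h
    by_contra hlt
    push_neg at hlt
    obtain ⟨w, hw, hd⟩ := (Metric.infDist_lt_iff hne).1 hlt
    exact absurd (h w hw) (not_le.2 hd)
  -- convex combination stays in Ω
  have hcombo : ∀ t : ℝ, 0 ≤ t → ∀ u : EuclideanSpace ℂ (Fin d), u ∈ Ω →
      x + Real.exp (-2 * t) • (u - x) ∈ Ω := by
    intro t ht u hu
    have ha0 : (0:ℝ) < Real.exp (-2 * t) := Real.exp_pos _
    have ha1 : Real.exp (-2 * t) ≤ 1 := Real.exp_le_one_iff.mpr (by linarith)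
    have := hconv.combo_interior_closure_mem_interior
      (x := u) (y := x) (a := Real.exp (-2 * t)) (b := 1 - Real.exp (-2 * t))
      (by rwa [hopen.interior_eq]) hx.1 ha0 (by linarith) (by ring)
    rw [hopen.interior_eq] at this
    convert this using 1
    module
  have hσΩ : ∀ t : ℝ, 0 ≤ t → σ t ∈ Ω := by
    intro t ht
    rw [hσ]
    exact hcombo t ht p hp
  -- key distance estimate
  have key : ∀ t : ℝ, 0 ≤ t →
      ε * Real.exp (-2 * t) * ‖x - p‖ ≤
        lineDist Ω (σ t) ((-2 * Real.exp (-2 * t)) • (p - x)) := by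
    intro t ht
    set a : ℝ := Real.exp (-2 * t) with ha
    have ha0 : (0:ℝ) < a := Real.exp_pos _
    rw [lineDist]
    apply hle
    · -- nonempty: x belongs
      refine ⟨x, hxΩ, (1/2 : ℂ), ?_⟩
      rw [hσ, ← ha]
      simp only [creal]
      push_cast
      module
    · rintro w ⟨hwΩ, c, hwc⟩
      set μ : ℂ := 1 - 2*c with hμ
      have hw : w = x + ((a:ℂ) * μ) • (p - x) := by
        rw [hwc, hσ, ← ha, hμ]
        simp only [creal]
        push_cast
        module
      set u : EuclideanSpace ℂ (Fin d) := x + μ • (p - x) with hu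
      have huΩ : u ∉ Ω := by
        intro huin
        apply hwΩ
        have hwu : w = x + a • (u - x) := by
          rw [hw, hu]
          simp only [creal]
          module
        rw [hwu]
        exact hcombo t ht u huin
      have humem : u ∈ {w | w ∉ Ω ∧ ∃ c : ℂ, w = p + c • (x - p)} := by
        refine ⟨huΩ, 1 - μ, ?_⟩
        rw [hu]
        module
      have h1 : ε * ‖x - p‖ ≤ dist p u :=
        le_trans hδ (Metric.infDist_le_dist_of_mem humem)
      have h2 : dist (σ t) w = a * dist p u := by
        rw [dist_eq_norm, dist_eq_norm, hσ, hw, hu, ← ha]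
        have e1 : x + a • (p - x) - (x + ((a:ℂ) * μ) • (p - x))
            = (a:ℝ) • (p - (x + μ • (p - x))) := by
          simp only [creal]
          module
        rw [e1, norm_smul, Real.norm_eq_abs, abs_of_pos ha0]
      rw [h2]
      calc ε * a * ‖x - p‖ = a * (ε * ‖x - p‖) := by ring
        _ ≤ a * dist p u := mul_le_mul_of_nonneg_left h1 ha0.le
  -- pointwise bounds on K
  have hKbd : ∀ t : ℝ, 0 ≤ t →
      K (σ t) ((-2 * Real.exp (-2 * t)) • (p - x)) ≤ 2 / ε := by
    intro t ht
    set a : ℝ := Real.exp (-2 * t) with ha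
    have ha0 : (0:ℝ) < a := Real.exp_pos _
    have hv : ((-2 * a : ℝ)) • (p - x) ≠ 0 :=
      smul_ne_zero (by nlinarith) hpx
    obtain ⟨_, hup⟩ := hK (σ t) (hσΩ t ht) _ hv
    have hL : ε * a * ‖x - p‖ ≤ lineDist Ω (σ t) ((-2 * a) • (p - x)) := key t ht
    have hLpos : 0 < ε * a * ‖x - p‖ := by positivity
    have hnv : ‖((-2 * a : ℝ)) • (p - x)‖ = 2 * a * ‖x - p‖ := by
      rw [norm_smul, Real.norm_eq_abs, abs_of_neg (by nlinarith), ← norm_neg,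
        show -(p - x) = x - p by abel]
      ring
    calc K (σ t) ((-2 * a) • (p - x))
        ≤ ‖((-2 * a : ℝ)) • (p - x)‖ / lineDist Ω (σ t) ((-2 * a) • (p - x)) := hup
      _ ≤ ‖((-2 * a : ℝ)) • (p - x)‖ / (ε * a * ‖x - p‖) :=
          div_le_div_of_nonneg_left (norm_nonneg _) hLpos hL
      _ = 2 / ε := by rw [hnv]; field_simp
  have hKnn : ∀ t : ℝ, 0 ≤ t →
      0 ≤ K (σ t) ((-2 * Real.exp (-2 * t)) • (p - x)) := by
    intro t ht
    set a : ℝ := Real.exp (-2 * t)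
    have ha0 : (0:ℝ) < a := Real.exp_pos _
    have hv : ((-2 * a : ℝ)) • (p - x) ≠ 0 :=
      smul_ne_zero (by nlinarith) hpx
    obtain ⟨hlo, _⟩ := hK (σ t) (hσΩ t ht) _ hv
    refine le_trans ?_ hlo
    have h0 : (0:ℝ) ≤ lineDist Ω (σ t) ((-2 * a) • (p - x)) := Metric.infDist_nonneg
    positivity
  -- main upper bound for ordered pair
  have hmain : ∀ t₁ t₂ : ℝ, 0 ≤ t₁ → t₁ ≤ t₂ →
      dΩ (σ t₁) (σ t₂) ≤ (2 / ε) * (t₂ - t₁) := by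
    intro t₁ t₂ h1 h12
    refine le_trans (hlen t₁ t₂ h1 h12) ?_
    rw [intervalIntegral.integral_of_le h12]
    have hconst : (∫ _t in Set.Ioc t₁ t₂, (2/ε : ℝ)) = (2/ε) * (t₂ - t₁) := by
      rw [MeasureTheory.setIntegral_const, smul_eq_mul, MeasureTheory.measureReal_def, Real.volume_Ioc,
        ENNReal.toReal_ofReal (by linarith)]
      ring
    rw [← hconst]
    apply MeasureTheory.integral_mono_of_nonneg
    · filter_upwards [MeasureTheory.self_mem_ae_restrict measurableSet_Ioc] with t htm
      exact hKnn t (le_trans h1 htm.1.le)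
    · exact MeasureTheory.integrableOn_const measure_Ioc_lt_top.ne
    · filter_upwards [MeasureTheory.self_mem_ae_restrict measurableSet_Ioc] with t htm
      exact hKbd t (le_trans h1 htm.1.le)
  intro t₁ t₂ h1 h2
  refine ⟨hlow t₁ t₂ h1 h2, ?_⟩
  rcases le_total t₁ t₂ with h | h
  · rw [abs_of_nonpos (by linarith)]
    have := hmain t₁ t₂ h1 h
    linarith
  · rw [abs_of_nonneg (by linarith), hdsym]
    have := hmain t₂ t₁ h2 h
    linarith
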